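/- In the construction of Section 4, with δ_k := ‖q'_{4k-1}β‖ − ‖q_{4k}α‖, one has 0 < 2δ_k·a_{4k+1} < ‖q_{4k+1}α‖ < ‖q'_{4k+1}β‖ for all k ≥ 1. -/

import Mathlib

noncomputable section

/-- distance from `t` to the nearest integer -/
def nint (t : ℝ) : ℝ := |t - round t|

/-- iterates of the Gauss map -/
def gaussIter (α : ℝ) : ℕ → ℝ
  | 0 => α
  | k + 1 => (Int.fract (gaussIter α k))⁻¹

/-- partial quotients of `α`: `pquot α k` is `a_k` for `k ≥ 1` -/
def pquot (α : ℝ) (k : ℕ) : ℕ := (⌊gaussIter α k⌋).toNat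

/-- the pair `(q_{k-1}, q_k)` of denominators of principal convergents of `α` -/
def qpair (α : ℝ) : ℕ → ℕ × ℕ
  | 0 => (0, 1)
  | k + 1 => ((qpair α k).2, pquot α (k + 1) * (qpair α k).2 + (qpair α k).1)

/-- the denominator `q_k` of the `k`-th principal convergent of `α` -/
def qden (α : ℝ) (k : ℕ) : ℕ := (qpair α k).2

end

namespace CFAux

noncomputable section

lemma gauss_succ (ξ : ℝ) (n : ℕ) :
    gaussIter ξ (n + 1) = (Int.fract (gaussIter ξ n))⁻¹ := rfl

lemma irr_gauss {ξ : ℝ} (h : Irrational ξ) : ∀ n, Irrational (gaussIter ξ n)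
  | 0 => h
  | n + 1 => by
    have h1 : Irrational (Int.fract (gaussIter ξ n)) := by
      rw [← Int.self_sub_floor]
      exact (irr_gauss h n).sub_intCast ⌊gaussIter ξ n⌋
    rw [gauss_succ]
    exact h1.inv

lemma fract_pos {ξ : ℝ} (h : Irrational ξ) (n : ℕ) :
    0 < Int.fract (gaussIter ξ n) :=
  Int.fract_pos.mpr ((irr_gauss h n).ne_int _)

lemma fract_lt_one (ξ : ℝ) (n : ℕ) : Int.fract (gaussIter ξ n) < 1 :=
  Int.fract_lt_one _

lemma gauss_one_lt {ξ : ℝ} (h : Irrational ξ) (n : ℕ) : 1 < gaussIter ξ (n + 1) := by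
  rw [gauss_succ]
  exact one_lt_inv_iff₀.mpr ⟨fract_pos h n, fract_lt_one ξ n⟩

lemma pquot_cast {ξ : ℝ} (h : Irrational ξ) (n : ℕ) :
    (pquot ξ (n + 1) : ℝ) = (⌊gaussIter ξ (n + 1)⌋ : ℝ) := by
  have h1 : (1 : ℤ) ≤ ⌊gaussIter ξ (n + 1)⌋ :=
    Int.le_floor.mpr (by exact_mod_cast (gauss_one_lt h n).le)
  have h2 : ((⌊gaussIter ξ (n + 1)⌋.toNat : ℤ)) = ⌊gaussIter ξ (n + 1)⌋ :=
    Int.toNat_of_nonneg (by linarith)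
  unfold pquot
  exact_mod_cast congrArg (fun z : ℤ => (z : ℝ)) h2

lemma pquot_pos {ξ : ℝ} (h : Irrational ξ) (n : ℕ) : 1 ≤ pquot ξ (n + 1) := by
  have h1 : (1 : ℤ) ≤ ⌊gaussIter ξ (n + 1)⌋ :=
    Int.le_floor.mpr (by exact_mod_cast (gauss_one_lt h n).le)
  unfold pquot
  omega

lemma gauss_eq {ξ : ℝ} (h : Irrational ξ) (n : ℕ) :
    gaussIter ξ (n + 1) = (pquot ξ (n + 1) : ℝ) + Int.fract (gaussIter ξ (n + 1)) := by
  rw [pquot_cast h]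
  have := Int.floor_add_fract (gaussIter ξ (n + 1))
  linarith

lemma gauss_mul {ξ : ℝ} (h : Irrational ξ) (n : ℕ) :
    Int.fract (gaussIter ξ n) * gaussIter ξ (n + 1) = 1 := by
  rw [gauss_succ]
  exact mul_inv_cancel₀ (fract_pos h n).ne'

/-- `D ξ n = |q_n ξ - p_n|`, defined as a product of fractional parts. -/
def D (ξ : ℝ) : ℕ → ℝ
  | 0 => ξ
  | n + 1 => D ξ n * Int.fract (gaussIter ξ (n + 1))

lemma D_zero (ξ : ℝ) : D ξ 0 = ξ := rfl

lemma D_succ (ξ : ℝ) (n : ℕ) : D ξ (n + 1) = D ξ n * Int.fract (gaussIter ξ (n + 1)) := rfl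

lemma D_pos {ξ : ℝ} (h : Irrational ξ) (h0 : 0 < ξ) : ∀ n, 0 < D ξ n
  | 0 => h0
  | n + 1 => mul_pos (D_pos h h0 n) (fract_pos h (n + 1))

lemma D_lt {ξ : ℝ} (h : Irrational ξ) (h0 : 0 < ξ) (n : ℕ) : D ξ (n + 1) < D ξ n := by
  have h1 := D_pos h h0 n
  have h2 := fract_lt_one ξ (n + 1)
  have h3 := fract_pos h (n + 1)
  rw [D_succ]
  nlinarith

lemma qden_zero (ξ : ℝ) : qden ξ 0 = 1 := rfl

lemma qden_one (ξ : ℝ) : qden ξ 1 = pquot ξ 1 := by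
  simp [qden, qpair]

lemma qden_rec (ξ : ℝ) (n : ℕ) :
    qden ξ (n + 2) = pquot ξ (n + 2) * qden ξ (n + 1) + qden ξ n := rfl

lemma one_le_qden {ξ : ℝ} (h : Irrational ξ) : ∀ n, 1 ≤ qden ξ n := by
  have key : ∀ n, 1 ≤ qden ξ n ∧ 1 ≤ qden ξ (n + 1) := by
    intro n
    induction n with
    | zero =>
      refine ⟨le_refl _, ?_⟩
      rw [qden_one]
      exact pquot_pos h 0
    | succ m ih =>
      refine ⟨ih.2, ?_⟩
      rw [qden_rec]
      have := pquot_pos h (m + 1)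
      nlinarith [ih.1, ih.2]
  exact fun n => (key n).1

lemma two_le_qden {ξ : ℝ} (h : Irrational ξ) (n : ℕ) : 2 ≤ qden ξ (n + 2) := by
  rw [qden_rec]
  have h1 := pquot_pos h (n + 1)
  have h2 := one_le_qden h n
  have h3 := one_le_qden h (n + 1)
  nlinarith

lemma key_identity {ξ : ℝ} (h : Irrational ξ) (h0 : 0 < ξ) (h1 : ξ < 1) :
    ∀ n, (qden ξ (n + 1) : ℝ) * D ξ n + (qden ξ n : ℝ) * D ξ (n + 1) = 1 := by
  intro n
  induction n with
  | zero =>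
    have hfr : Int.fract ξ = ξ := Int.fract_eq_self.mpr ⟨h0.le, h1⟩
    have hg1 : gaussIter ξ 1 = (pquot ξ 1 : ℝ) + Int.fract (gaussIter ξ 1) := gauss_eq h 0
    have hg0 : gaussIter ξ 0 = ξ := rfl
    have hmul : Int.fract (gaussIter ξ 0) * gaussIter ξ 1 = 1 := gauss_mul h 0
    rw [hg0, hfr] at hmul
    rw [qden_one, qden_zero, D_succ, D_zero]
    push_cast
    calc (pquot ξ 1 : ℝ) * ξ + 1 * (ξ * Int.fract (gaussIter ξ 1))
        = ξ * ((pquot ξ 1 : ℝ) + Int.fract (gaussIter ξ 1)) := by ring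
      _ = ξ * gaussIter ξ 1 := by rw [← hg1]
      _ = 1 := hmul
  | succ n ih =>
    have e1 : (qden ξ (n + 2) : ℝ)
        = (pquot ξ (n + 2) : ℝ) * (qden ξ (n + 1) : ℝ) + (qden ξ n : ℝ) := by
      rw [qden_rec]; push_cast; ring
    have e2 : D ξ (n + 2) = D ξ (n + 1) * Int.fract (gaussIter ξ (n + 2)) := D_succ ξ (n + 1)
    have e3 : gaussIter ξ (n + 2) = (pquot ξ (n + 2) : ℝ) + Int.fract (gaussIter ξ (n + 2)) :=
      gauss_eq h (n + 1)
    have e4 : Int.fract (gaussIter ξ (n + 1)) * gaussIter ξ (n + 2) = 1 := gauss_mul h (n + 1)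
    have e5 : D ξ (n + 1) = D ξ n * Int.fract (gaussIter ξ (n + 1)) := D_succ ξ n
    rw [e1, e2, e5]
    rw [e5] at ih
    linear_combination ih + ((qden ξ (n + 1) : ℝ) * D ξ n) * e4
      - ((qden ξ (n + 1) : ℝ) * D ξ n * Int.fract (gaussIter ξ (n + 1))) * e3

lemma D_rec {ξ : ℝ} (h : Irrational ξ) (n : ℕ) :
    D ξ (n + 2) = D ξ n - (pquot ξ (n + 2) : ℝ) * D ξ (n + 1) := by
  have e2 : D ξ (n + 2) = D ξ (n + 1) * Int.fract (gaussIter ξ (n + 2)) := D_succ ξ (n + 1)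
  have e3 : gaussIter ξ (n + 2) = (pquot ξ (n + 2) : ℝ) + Int.fract (gaussIter ξ (n + 2)) :=
    gauss_eq h (n + 1)
  have e4 : Int.fract (gaussIter ξ (n + 1)) * gaussIter ξ (n + 2) = 1 := gauss_mul h (n + 1)
  have e5 : D ξ (n + 1) = D ξ n * Int.fract (gaussIter ξ (n + 1)) := D_succ ξ n
  rw [e2, e5]
  linear_combination (D ξ n) * e4 - (D ξ n * Int.fract (gaussIter ξ (n + 1))) * e3

/-- numerators of the convergents -/
def pp (ξ : ℝ) : ℕ → ℤ × ℤ
  | 0 => (1, 0)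
  | n + 1 => ((pp ξ n).2, pquot ξ (n + 1) * (pp ξ n).2 + (pp ξ n).1)

def pnum (ξ : ℝ) (n : ℕ) : ℤ := (pp ξ n).2

lemma pnum_zero (ξ : ℝ) : pnum ξ 0 = 0 := rfl

lemma pnum_one (ξ : ℝ) : pnum ξ 1 = pquot ξ 1 * 0 + 1 := rfl

lemma pnum_rec (ξ : ℝ) (n : ℕ) :
    pnum ξ (n + 2) = pquot ξ (n + 2) * pnum ξ (n + 1) + pnum ξ n := rfl

lemma sign_eq {ξ : ℝ} (h : Irrational ξ) (h0 : 0 < ξ) (h1 : ξ < 1) :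
    ∀ n, (qden ξ n : ℝ) * ξ - (pnum ξ n : ℝ) = (-1) ^ n * D ξ n := by
  have base1 : (qden ξ 1 : ℝ) * ξ - (pnum ξ 1 : ℝ) = (-1) ^ 1 * D ξ 1 := by
    have hfr : Int.fract ξ = ξ := Int.fract_eq_self.mpr ⟨h0.le, h1⟩
    have e3 : gaussIter ξ 1 = (pquot ξ 1 : ℝ) + Int.fract (gaussIter ξ 1) := gauss_eq h 0
    have e4 : Int.fract (gaussIter ξ 0) * gaussIter ξ 1 = 1 := gauss_mul h 0
    have hg0 : gaussIter ξ 0 = ξ := rfl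
    rw [hg0, hfr] at e4
    rw [qden_one, pnum_one, D_succ, D_zero]
    push_cast
    linear_combination e4 - ξ * e3
  have key : ∀ n, ((qden ξ n : ℝ) * ξ - (pnum ξ n : ℝ) = (-1) ^ n * D ξ n)
      ∧ ((qden ξ (n + 1) : ℝ) * ξ - (pnum ξ (n + 1) : ℝ) = (-1) ^ (n + 1) * D ξ (n + 1)) := by
    intro n
    induction n with
    | zero =>
      constructor
      · simp [qden_zero, pnum_zero, D_zero]
      · exact base1
    | succ m ih =>
      refine ⟨ih.2, ?_⟩
      have e1 : (qden ξ (m + 2) : ℝ)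
          = (pquot ξ (m + 2) : ℝ) * (qden ξ (m + 1) : ℝ) + (qden ξ m : ℝ) := by
        rw [qden_rec]; push_cast; ring
      have e2 : (pnum ξ (m + 2) : ℝ)
          = (pquot ξ (m + 2) : ℝ) * (pnum ξ (m + 1) : ℝ) + (pnum ξ m : ℝ) := by
        rw [pnum_rec]; push_cast; ring
      have e3 := D_rec h m
      rw [e1, e2, e3]
      linear_combination (pquot ξ (m + 2) : ℝ) * ih.2 + ih.1
  exact fun n => (key n).1

lemma D_lt_half {ξ : ℝ} (h : Irrational ξ) (h0 : 0 < ξ) (h1 : ξ < 1) (n : ℕ) :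
    D ξ (n + 1) < 1 / 2 := by
  have hk := key_identity h h0 h1 (n + 1)
  have h2 : (2 : ℝ) ≤ (qden ξ (n + 2) : ℝ) := by exact_mod_cast two_le_qden h n
  have h3 := D_pos h h0 (n + 1)
  have h4 := D_pos h h0 (n + 2)
  have h5 : (0 : ℝ) < (qden ξ (n + 1) : ℝ) := by
    have := one_le_qden h (n + 1); exact_mod_cast Nat.lt_of_lt_of_le Nat.zero_lt_one this
  nlinarith

lemma round_eq_of_abs_lt {x : ℝ} {p : ℤ} (h : |x - (p : ℝ)| < 1 / 2) : round x = p := by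
  rw [round_eq]
  rw [abs_lt] at h
  apply Int.floor_eq_iff.mpr
  constructor
  · linarith [h.1]
  · push_cast; linarith [h.2]

lemma nint_eq {ξ : ℝ} (h : Irrational ξ) (h0 : 0 < ξ) (h1 : ξ < 1) (n : ℕ) (hn : 1 ≤ n) :
    nint ((qden ξ n : ℝ) * ξ) = D ξ n := by
  obtain ⟨m, rfl⟩ : ∃ m, n = m + 1 := ⟨n - 1, by omega⟩
  have hs := sign_eq h h0 h1 (m + 1)
  have hpos := D_pos h h0 (m + 1)
  have habs : |(qden ξ (m + 1) : ℝ) * ξ - (pnum ξ (m + 1) : ℝ)| = D ξ (m + 1) := by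
    rw [hs, abs_mul, abs_pow, abs_neg, abs_one, one_pow, one_mul, abs_of_pos hpos]
  have hhalf := D_lt_half h h0 h1 m
  have hround : round ((qden ξ (m + 1) : ℝ) * ξ) = pnum ξ (m + 1) :=
    round_eq_of_abs_lt (by rw [habs]; linarith)
  unfold nint
  rw [hround, habs]

end

end CFAux
namespace CFAux

/-- polynomial fact P1 -/
lemma polyP1 (x y : ℝ) :
    ((2*x+y-1)*(4*x+3*y+1)+x+y) * (2*x+y)
      + (((2*x+y-1)*(4*x+3*y+1)+x+y) + 1) * (4*x+3*y+1)
    = ((2*x+y-1)*(4*x+3*y+1)+x+y)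
      + ((6*x+4*y)*((2*x+y-1)*(4*x+3*y+1)+x+y) + (4*x+3*y+1)) := by ring

/-- polynomial fact P2 : A(A+1) ≤ 2(s-1)(A+1)b -/
lemma polyP2 (x y : ℝ) (hx : 1 ≤ x) (hy : 2 ≤ y) :
    ((2*x+y-1)*(4*x+3*y+1)+x+y) * (((2*x+y-1)*(4*x+3*y+1)+x+y) + 1)
    ≤ 2*((2*x+y)-1) * ((((2*x+y-1)*(4*x+3*y+1)+x+y) + 1) * (4*x+3*y+1)) := by
  obtain ⟨u, hu, rfl⟩ : ∃ u, 0 ≤ u ∧ x = 1 + u := ⟨x - 1, by linarith, by ring⟩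
  obtain ⟨v, hv, rfl⟩ : ∃ v, 0 ≤ v ∧ y = 2 + v := ⟨y - 2, by linarith, by ring⟩
  nlinarith [mul_nonneg (pow_nonneg hu 1) (pow_nonneg hv 1),
    mul_nonneg (pow_nonneg hu 2) (pow_nonneg hv 1),
    mul_nonneg (pow_nonneg hu 1) (pow_nonneg hv 2),
    mul_nonneg (pow_nonneg hu 2) (pow_nonneg hv 2),
    mul_nonneg (pow_nonneg hu 3) (pow_nonneg hv 1),
    mul_nonneg (pow_nonneg hu 1) (pow_nonneg hv 3),
    pow_nonneg hu 2, pow_nonneg hu 3, pow_nonneg hu 4,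
    pow_nonneg hv 2, pow_nonneg hv 3, pow_nonneg hv 4, hu, hv]

/-- polynomial fact P3 -/
lemma polyP3 (x y : ℝ) (hx : 1 ≤ x) (hy : 2 ≤ y) :
    2*((2*x+y)-1)*(((2*x+y-1)*(4*x+3*y+1)+x+y)*(2*x+y)
        - ((6*x+4*y)*((2*x+y-1)*(4*x+3*y+1)+x+y) + (4*x+3*y+1)) + 1)
      * ((6*x+4*y)*((2*x+y-1)*(4*x+3*y+1)+x+y) + (4*x+3*y+1))
    ≤ (((2*x+y-1)*(4*x+3*y+1)+x+y) * (((2*x+y-1)*(4*x+3*y+1)+x+y) + 1)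
        - 2*((2*x+y)-1)*((((2*x+y-1)*(4*x+3*y+1)+x+y) + 1) * (4*x+3*y+1)))
      * (((6*x+4*y)*((2*x+y-1)*(4*x+3*y+1)+x+y) + (4*x+3*y+1)) - 1) := by
  obtain ⟨u, hu, rfl⟩ : ∃ u, 0 ≤ u ∧ x = 1 + u := ⟨x - 1, by linarith, by ring⟩
  obtain ⟨v, hv, rfl⟩ : ∃ v, 0 ≤ v ∧ y = 2 + v := ⟨y - 2, by linarith, by ring⟩
  linarith [mul_nonneg (pow_nonneg hu 0) (pow_nonneg hv 0), mul_nonneg (pow_nonneg hu 0) (pow_nonneg hv 1), mul_nonneg (pow_nonneg hu 0) (pow_nonneg hv 2), mul_nonneg (pow_nonneg hu 0) (pow_nonneg hv 3), mul_nonneg (pow_nonneg hu 0) (pow_nonneg hv 4), mul_nonneg (pow_nonneg hu 0) (pow_nonneg hv 5), mul_nonneg (pow_nonneg hu 0) (pow_nonneg hv 6), mul_nonneg (pow_nonneg hu 0) (pow_nonneg hv 7), mul_nonneg (pow_nonneg hu 1) (pow_nonneg hv 0), mul_nonneg (pow_nonneg hu 1) (pow_nonneg hv 1), mul_nonneg (pow_nonneg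 hu 1) (pow_nonneg hv 2), mul_nonneg (pow_nonneg hu 1) (pow_nonneg hv 3), mul_nonneg (pow_nonneg hu 1) (pow_nonneg hv 4), mul_nonneg (pow_nonneg hu 1) (pow_nonneg hv 5), mul_nonneg (pow_nonneg hu 1) (pow_nonneg hv 6), mul_nonneg (pow_nonneg hu 2) (pow_nonneg hv 0), mul_nonneg (pow_nonneg hu 2) (pow_nonneg hv 1), mul_nonneg (pow_nonneg hu 2) (pow_nonneg hv 2), mul_nonneg (pow_nonneg hu 2) (pow_nonneg hv 3), mul_nonneg (pow_nonneg hu 2) (pow_nonneg hv 4), mul_nonneg (pow_nonneg hu 2) (pow_nonneg hv 5), mul_nonneg (pow_nonneg hu 3) (pow_nonneg hv 0), mul_nonneg (pow_nonneg hu 3) (pow_nonneg hv 1), mul_nonneg (pow_nonneg hu 3) (pow_nonneg hv 2), mul_nonneg (pow_nonneg hu 3) (pow_nonneg hv 3), mul_nonneg (pow_nonneg hu 3) (pow_nonneg hv 4), mul_nonneg (pow_nonneg hu 4) (pow_nonneg hv 0), mul_nonneg (pow_nonneg hu 4) (pow_nonneg hv 1), mul_nonneg (pow_nonneg hu 4)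 (pow_nonneg hv 2), mul_nonneg (pow_nonneg hu 4) (pow_nonneg hv 3), mul_nonneg (pow_nonneg hu 5) (pow_nonneg hv 0), mul_nonneg (pow_nonneg hu 5) (pow_nonneg hv 1), mul_nonneg (pow_nonneg hu 5) (pow_nonneg hv 2), mul_nonneg (pow_nonneg hu 6) (pow_nonneg hv 0), mul_nonneg (pow_nonneg hu 6) (pow_nonneg hv 1), mul_nonneg (pow_nonneg hu 7) (pow_nonneg hv 0)]

lemma abstract1 (A B b s d4 d5 e3 e5 : ℝ)
    (hA : 0 < A) (hB : 0 < B) (hb : 0 < b) (hs : 0 < s)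
    (hd5 : 0 < d5) (he5 : 0 < e5)
    (h1 : A * d4 + b * d5 = 1)
    (h2 : (A + 1) * e3 = 1 + s * e5)
    (hSd : 1 < (A + B) * d5) (hSe : 1 < (A + B) * e5)
    (hP1 : A * s + (A + 1) * b = A + B) :
    0 < e3 - d4 := by
  have hX : A * (A + 1) * (e3 - d4) = A * s * e5 + (A + 1) * b * d5 - 1 := by
    linear_combination A * h2 - (A + 1) * h1
  have hAB : (0 : ℝ) < A + B := by linarith
  have t1 : 0 < (A * s) * ((A + B) * e5 - 1) :=
    mul_pos (mul_pos hA hs) (by linarith)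
  have t2 : 0 < ((A + 1) * b) * ((A + B) * d5 - 1) :=
    mul_pos (mul_pos (by linarith) hb) (by linarith)
  have h3 : 0 < (A + B) * (A * s * e5 + (A + 1) * b * d5 - 1) := by nlinarith [t1, t2, hP1]
  have hY : 0 < A * s * e5 + (A + 1) * b * d5 - 1 := by
    by_contra hle
    push_neg at hle
    nlinarith [mul_nonneg hAB.le (neg_nonneg.mpr hle)]
  have hAA : (0 : ℝ) < A * (A + 1) := by nlinarith
  by_contra hle
  push_neg at hle
  nlinarith [mul_nonneg hAA.le (by linarith : (0:ℝ) ≤ d4 - e3)]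

lemma abstract2 (A B b s d5 e5 : ℝ)
    (hA : 0 < A) (hB1 : 1 < B) (hb : 0 < b) (hs : 1 < s)
    (hd5pos : 0 < d5) (he5pos : 0 < e5)
    (hd5B : B * d5 < 1) (he5B : (B - 1) * e5 < 1)
    (hc : A * (A + 1) ≤ 2 * (s - 1) * ((A + 1) * b))
    (hP3 : 2 * (s - 1) * (A * s - B + 1) * B
      ≤ (A * (A + 1) - 2 * (s - 1) * ((A + 1) * b)) * (B - 1)) :
    2 * (s - 1) * (A * s * e5 + (A + 1) * b * d5 - 1) < A * (A + 1) * d5 := by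
  have hBpos : (0 : ℝ) < B := by linarith
  have hB1pos : (0 : ℝ) < B - 1 := by linarith
  have hs1 : (0 : ℝ) < s - 1 := by linarith
  have hspos : (0 : ℝ) < s := by linarith
  -- k1 : B*(B-1)*c*d5 ≥ (B-1)*c   with c := A*(A+1) - 2*(s-1)*((A+1)*b) ≤ 0
  have k1 : (B - 1) * (A * (A + 1) - 2 * (s - 1) * ((A + 1) * b))
      ≤ B * (B - 1) * (A * (A + 1) - 2 * (s - 1) * ((A + 1) * b)) * d5 := by
    nlinarith [mul_nonneg (mul_nonneg hB1pos.le (by linarith : (0:ℝ) ≤ 2 * (s - 1) * ((A + 1) * b) - A * (A + 1))) (by linarith : (0:ℝ) ≤ 1 - B * d5)]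
  have hcoef : (0 : ℝ) < 2 * (s - 1) * A * s * B :=
    mul_pos (mul_pos (mul_pos (by linarith) hA) hspos) hBpos
  have k2 : B * (B - 1) * (2 * (s - 1) * A * s * e5) < 2 * (s - 1) * A * s * B := by
    nlinarith [mul_lt_mul_of_pos_left he5B hcoef]
  have hBB : (0 : ℝ) < B * (B - 1) := mul_pos hBpos hB1pos
  have main : 0 < B * (B - 1) *
      (A * (A + 1) * d5 - 2 * (s - 1) * (A * s * e5 + (A + 1) * b * d5 - 1)) := by
    nlinarith [k1, k2, hP3]
  by_contra hle
  push_neg at hle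
  nlinarith [mul_nonneg hBB.le
    (by linarith : (0:ℝ) ≤ 2 * (s - 1) * (A * s * e5 + (A + 1) * b * d5 - 1) - A * (A + 1) * d5)]

lemma abstract3 (A B d5 d6 d7 e5 e6 e7 : ℝ)
    (hA : 0 < A) (hB1 : 1 < B)
    (hd : B * d5 + A * d6 = 1) (he : (B - 1) * e5 + (A + 1) * e6 = 1)
    (h6 : d7 = d5 - d6) (h7 : e7 = e5 - 2 * e6)
    (hd7 : 0 < d7) (hd76 : d7 < d6) (he7 : 0 < e7) (he5 : 0 < e5) (hd5 : 0 < d5) :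
    d5 < e5 := by
  have h1 : (2 * B + A) * d5 < 2 := by
    nlinarith [mul_pos hA (by linarith : (0:ℝ) < 2 * d6 - d5)]
  have h2 : 2 < (2 * B + A) * e5 := by
    nlinarith [mul_pos (by linarith : (0:ℝ) < A + 1) (by linarith : (0:ℝ) < e5 - 2 * e6)]
  have hpos : (0 : ℝ) < 2 * B + A := by linarith
  by_contra hle
  push_neg at hle
  nlinarith [mul_nonneg hpos.le (by linarith : (0:ℝ) ≤ d5 - e5)]

end CFAux
namespace CFAux

lemma blockForms (α β : ℝ) (hα : Irrational α) (hβ : Irrational β)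
    (R Q : ℕ → ℕ)
    (hR : ∀ k, 1 ≤ k → R k = qden α (4 * k - 3) + 1)
    (hQ : ∀ k, 1 ≤ k → Q k + 1 = qden α (4 * k - 2))
    (ha3 : ∀ k, 1 ≤ k → pquot α (4 * k - 1) = 1)
    (ha4 : ∀ k, 1 ≤ k → pquot α (4 * k) = 3)
    (ha5 : ∀ k, 1 ≤ k → pquot α (4 * k + 1) + 1 = 2 * Q k + R k)
    (ha6 : ∀ k, 1 ≤ k → pquot α (4 * k + 2) = 6 * Q k + 4 * R k)
    (ha'3 : ∀ k, 1 ≤ k → pquot β (4 * k - 1) = 2)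
    (ha'4 : ∀ k, 1 ≤ k → pquot β (4 * k) + 2 = 4 * Q k + 3 * R k)
    (ha'5 : ∀ k, 1 ≤ k → pquot β (4 * k + 1) = 1)
    (ha'6 : ∀ k, 1 ≤ k → pquot β (4 * k + 2) + 1 = 6 * Q k + 4 * R k)
    (j : ℕ)
    (hb1 : qden β (4 * j + 1) = qden α (4 * j + 1) + 1)
    (hb2 : qden β (4 * j + 2) + 1 = qden α (4 * j + 2)) :
    (qden α (4*j+3) : ℤ) = (Q (j+1) : ℤ) + (R (j+1) : ℤ)
    ∧ (qden α (4*j+4) : ℤ) = 4*(Q (j+1) : ℤ) + 3*(R (j+1) : ℤ) + 1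
    ∧ (qden α (4*j+5) : ℤ)
      = (2*(Q (j+1) : ℤ)+(R (j+1) : ℤ)-1)*(4*(Q (j+1) : ℤ)+3*(R (j+1) : ℤ)+1)
        +(Q (j+1) : ℤ)+(R (j+1) : ℤ)
    ∧ (qden α (4*j+6) : ℤ)
      = (6*(Q (j+1) : ℤ)+4*(R (j+1) : ℤ))
          *((2*(Q (j+1) : ℤ)+(R (j+1) : ℤ)-1)*(4*(Q (j+1) : ℤ)+3*(R (j+1) : ℤ)+1)
            +(Q (j+1) : ℤ)+(R (j+1) : ℤ))
        + (4*(Q (j+1) : ℤ)+3*(R (j+1) : ℤ)+1)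
    ∧ (qden β (4*j+3) : ℤ) = 2*(Q (j+1) : ℤ)+(R (j+1) : ℤ)
    ∧ (qden β (4*j+4) : ℤ) = (4*(Q (j+1) : ℤ)+3*(R (j+1) : ℤ)-2)*(2*(Q (j+1) : ℤ)+(R (j+1) : ℤ))
        +(Q (j+1) : ℤ)
    ∧ (qden β (4*j+5) : ℤ)
      = (2*(Q (j+1) : ℤ)+(R (j+1) : ℤ)-1)*(4*(Q (j+1) : ℤ)+3*(R (j+1) : ℤ)+1)
        +(Q (j+1) : ℤ)+(R (j+1) : ℤ) + 1
    ∧ (qden β (4*j+6) : ℤ)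
      = (6*(Q (j+1) : ℤ)+4*(R (j+1) : ℤ))
          *((2*(Q (j+1) : ℤ)+(R (j+1) : ℤ)-1)*(4*(Q (j+1) : ℤ)+3*(R (j+1) : ℤ)+1)
            +(Q (j+1) : ℤ)+(R (j+1) : ℤ))
        + (4*(Q (j+1) : ℤ)+3*(R (j+1) : ℤ)+1) - 1
    ∧ (1 : ℤ) ≤ (Q (j+1) : ℤ) ∧ (2 : ℤ) ≤ (R (j+1) : ℤ) := by
  have hR' := hR (j+1) (by omega)
  rw [show 4*(j+1)-3 = 4*j+1 by omega] at hR'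
  have hQ' := hQ (j+1) (by omega)
  rw [show 4*(j+1)-2 = 4*j+2 by omega] at hQ'
  have a3 := ha3 (j+1) (by omega)
  rw [show 4*(j+1)-1 = 4*j+3 by omega] at a3
  have a4 := ha4 (j+1) (by omega)
  rw [show 4*(j+1) = 4*j+4 by omega] at a4
  have a5 := ha5 (j+1) (by omega)
  rw [show 4*(j+1)+1 = 4*j+5 by omega] at a5
  have a6 := ha6 (j+1) (by omega)
  rw [show 4*(j+1)+2 = 4*j+6 by omega] at a6
  have b3 := ha'3 (j+1) (by omega)
  rw [show 4*(j+1)-1 = 4*j+3 by omega] at b3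
  have b4 := ha'4 (j+1) (by omega)
  rw [show 4*(j+1) = 4*j+4 by omega] at b4
  have b5 := ha'5 (j+1) (by omega)
  rw [show 4*(j+1)+1 = 4*j+5 by omega] at b5
  have b6 := ha'6 (j+1) (by omega)
  rw [show 4*(j+1)+2 = 4*j+6 by omega] at b6
  have r3 := qden_rec α (4*j+1)
  simp only [show 4*j+1+2 = 4*j+3 by omega, show 4*j+1+1 = 4*j+2 by omega] at r3
  have r4 := qden_rec α (4*j+2)
  simp only [show 4*j+2+2 = 4*j+4 by omega, show 4*j+2+1 = 4*j+3 by omega] at r4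
  have r5 := qden_rec α (4*j+3)
  simp only [show 4*j+3+2 = 4*j+5 by omega, show 4*j+3+1 = 4*j+4 by omega] at r5
  have r6 := qden_rec α (4*j+4)
  simp only [show 4*j+4+2 = 4*j+6 by omega, show 4*j+4+1 = 4*j+5 by omega] at r6
  have r3' := qden_rec β (4*j+1)
  simp only [show 4*j+1+2 = 4*j+3 by omega, show 4*j+1+1 = 4*j+2 by omega] at r3'
  have r4' := qden_rec β (4*j+2)
  simp only [show 4*j+2+2 = 4*j+4 by omega, show 4*j+2+1 = 4*j+3 by omega] at r4'
  have r5' := qden_rec β (4*j+3)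
  simp only [show 4*j+3+2 = 4*j+5 by omega, show 4*j+3+1 = 4*j+4 by omega] at r5'
  have r6' := qden_rec β (4*j+4)
  simp only [show 4*j+4+2 = 4*j+6 by omega, show 4*j+4+1 = 4*j+5 by omega] at r6'
  rw [a3] at r3
  rw [a4] at r4
  rw [b3] at r3'
  rw [b5] at r5'
  have s1 : 1 ≤ qden α (4*j+1) := one_le_qden hα _
  have s2 : 2 ≤ qden α (4*j+2) := two_le_qden hα (4*j)
  have hQQ : (1 : ℤ) ≤ (Q (j+1) : ℤ) := by omega
  have hRR : (2 : ℤ) ≤ (R (j+1) : ℤ) := by omega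
  have f3 : (qden α (4*j+3) : ℤ) = (Q (j+1) : ℤ) + (R (j+1) : ℤ) := by omega
  have f4 : (qden α (4*j+4) : ℤ) = 4*(Q (j+1) : ℤ) + 3*(R (j+1) : ℤ) + 1 := by omega
  have r5z : (qden α (4*j+5) : ℤ)
      = (pquot α (4*j+5) : ℤ) * (qden α (4*j+4) : ℤ) + (qden α (4*j+3) : ℤ) := by
    exact_mod_cast r5
  have a5z : (pquot α (4*j+5) : ℤ) = 2*(Q (j+1) : ℤ) + (R (j+1) : ℤ) - 1 := by omega
  have f5 : (qden α (4*j+5) : ℤ)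
      = (2*(Q (j+1) : ℤ)+(R (j+1) : ℤ)-1)*(4*(Q (j+1) : ℤ)+3*(R (j+1) : ℤ)+1)
        +(Q (j+1) : ℤ)+(R (j+1) : ℤ) := by
    rw [r5z, a5z, f4, f3]; ring
  have r6z : (qden α (4*j+6) : ℤ)
      = (pquot α (4*j+6) : ℤ) * (qden α (4*j+5) : ℤ) + (qden α (4*j+4) : ℤ) := by
    exact_mod_cast r6
  have a6z : (pquot α (4*j+6) : ℤ) = 6*(Q (j+1) : ℤ) + 4*(R (j+1) : ℤ) := by omega
  have f6 : (qden α (4*j+6) : ℤ)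
      = (6*(Q (j+1) : ℤ)+4*(R (j+1) : ℤ))
          *((2*(Q (j+1) : ℤ)+(R (j+1) : ℤ)-1)*(4*(Q (j+1) : ℤ)+3*(R (j+1) : ℤ)+1)
            +(Q (j+1) : ℤ)+(R (j+1) : ℤ))
        + (4*(Q (j+1) : ℤ)+3*(R (j+1) : ℤ)+1) := by
    rw [r6z, a6z, f5, f4]
  have g3 : (qden β (4*j+3) : ℤ) = 2*(Q (j+1) : ℤ)+(R (j+1) : ℤ) := by omega
  have r4z' : (qden β (4*j+4) : ℤ)
      = (pquot β (4*j+4) : ℤ) * (qden β (4*j+3) : ℤ) + (qden β (4*j+2) : ℤ) := by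
    exact_mod_cast r4'
  have b4z : (pquot β (4*j+4) : ℤ) = 4*(Q (j+1) : ℤ) + 3*(R (j+1) : ℤ) - 2 := by omega
  have q2z' : (qden β (4*j+2) : ℤ) = (Q (j+1) : ℤ) := by omega
  have g4 : (qden β (4*j+4) : ℤ)
      = (4*(Q (j+1) : ℤ)+3*(R (j+1) : ℤ)-2)*(2*(Q (j+1) : ℤ)+(R (j+1) : ℤ))+(Q (j+1) : ℤ) := by
    rw [r4z', b4z, g3, q2z']
  have r5z' : (qden β (4*j+5) : ℤ) = (qden β (4*j+4) : ℤ) + (qden β (4*j+3) : ℤ) := by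
    have : qden β (4*j+5) = qden β (4*j+4) + qden β (4*j+3) := by omega
    exact_mod_cast this
  have g5 : (qden β (4*j+5) : ℤ)
      = (2*(Q (j+1) : ℤ)+(R (j+1) : ℤ)-1)*(4*(Q (j+1) : ℤ)+3*(R (j+1) : ℤ)+1)
        +(Q (j+1) : ℤ)+(R (j+1) : ℤ) + 1 := by
    rw [r5z', g4, g3]; ring
  have r6z' : (qden β (4*j+6) : ℤ)
      = (pquot β (4*j+6) : ℤ) * (qden β (4*j+5) : ℤ) + (qden β (4*j+4) : ℤ) := by
    exact_mod_cast r6'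
  have b6z : (pquot β (4*j+6) : ℤ) = 6*(Q (j+1) : ℤ) + 4*(R (j+1) : ℤ) - 1 := by omega
  have g6 : (qden β (4*j+6) : ℤ)
      = (6*(Q (j+1) : ℤ)+4*(R (j+1) : ℤ))
          *((2*(Q (j+1) : ℤ)+(R (j+1) : ℤ)-1)*(4*(Q (j+1) : ℤ)+3*(R (j+1) : ℤ)+1)
            +(Q (j+1) : ℤ)+(R (j+1) : ℤ))
        + (4*(Q (j+1) : ℤ)+3*(R (j+1) : ℤ)+1) - 1 := by
    rw [r6z', b6z, g5, g4]; ring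
  exact ⟨f3, f4, f5, f6, g3, g4, g5, g6, hQQ, hRR⟩

end CFAux
namespace CFAux

lemma masterInv (α β : ℝ) (hα : Irrational α) (hβ : Irrational β)
    (R Q : ℕ → ℕ)
    (hR : ∀ k, 1 ≤ k → R k = qden α (4 * k - 3) + 1)
    (hQ : ∀ k, 1 ≤ k → Q k + 1 = qden α (4 * k - 2))
    (ha1 : pquot α 1 = 2) (ha2 : pquot α 2 = 2)
    (ha'1 : pquot β 1 = 3) (ha'2 : pquot β 2 = 1)
    (ha3 : ∀ k, 1 ≤ k → pquot α (4 * k - 1) = 1)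
    (ha4 : ∀ k, 1 ≤ k → pquot α (4 * k) = 3)
    (ha5 : ∀ k, 1 ≤ k → pquot α (4 * k + 1) + 1 = 2 * Q k + R k)
    (ha6 : ∀ k, 1 ≤ k → pquot α (4 * k + 2) = 6 * Q k + 4 * R k)
    (ha'3 : ∀ k, 1 ≤ k → pquot β (4 * k - 1) = 2)
    (ha'4 : ∀ k, 1 ≤ k → pquot β (4 * k) + 2 = 4 * Q k + 3 * R k)
    (ha'5 : ∀ k, 1 ≤ k → pquot β (4 * k + 1) = 1)
    (ha'6 : ∀ k, 1 ≤ k → pquot β (4 * k + 2) + 1 = 6 * Q k + 4 * R k) :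
    ∀ j, qden β (4 * j + 1) = qden α (4 * j + 1) + 1
      ∧ qden β (4 * j + 2) + 1 = qden α (4 * j + 2) := by
  intro j
  induction j with
  | zero =>
    have e1α : qden α 1 = 2 := by rw [qden_one, ha1]
    have e1β : qden β 1 = 3 := by rw [qden_one, ha'1]
    have rα := qden_rec α 0
    norm_num at rα
    rw [ha2, e1α, qden_zero] at rα
    have rβ := qden_rec β 0
    norm_num at rβ
    rw [ha'2, e1β, qden_zero] at rβ
    constructor
    · simp only [show 4*0+1 = 1 by norm_num]; omega
    · simp only [show 4*0+2 = 2 by norm_num]; omega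
  | succ j ih =>
    obtain ⟨f3, f4, f5, f6, g3, g4, g5, g6, hQQ, hRR⟩ :=
      blockForms α β hα hβ R Q hR hQ ha3 ha4 ha5 ha6 ha'3 ha'4 ha'5 ha'6 j ih.1 ih.2
    constructor
    · have h : (qden β (4*j+5) : ℤ) = (qden α (4*j+5) : ℤ) + 1 := by rw [g5, f5]
      rw [show 4*(j+1)+1 = 4*j+5 by omega]
      exact_mod_cast h
    · have h : (qden β (4*j+6) : ℤ) + 1 = (qden α (4*j+6) : ℤ) := by rw [g6, f6]; ring
      rw [show 4*(j+1)+2 = 4*j+6 by omega]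
      exact_mod_cast h

end CFAux
set_option maxHeartbeats 1000000 in
theorem delta_positivity_bounds (α β : ℝ)
    (hα0 : 0 < α) (hα1 : α < 1) (hβ0 : 0 < β) (hβ1 : β < 1)
    (hα : Irrational α) (hβ : Irrational β)
    (R Q : ℕ → ℕ)
    (hR : ∀ k, 1 ≤ k → R k = qden α (4 * k - 3) + 1)
    (hQ : ∀ k, 1 ≤ k → Q k + 1 = qden α (4 * k - 2))
    (ha1 : pquot α 1 = 2) (ha2 : pquot α 2 = 2)
    (ha'1 : pquot β 1 = 3) (ha'2 : pquot β 2 = 1)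
    (ha3 : ∀ k, 1 ≤ k → pquot α (4 * k - 1) = 1)
    (ha4 : ∀ k, 1 ≤ k → pquot α (4 * k) = 3)
    (ha5 : ∀ k, 1 ≤ k → pquot α (4 * k + 1) + 1 = 2 * Q k + R k)
    (ha6 : ∀ k, 1 ≤ k → pquot α (4 * k + 2) = 6 * Q k + 4 * R k)
    (ha'3 : ∀ k, 1 ≤ k → pquot β (4 * k - 1) = 2)
    (ha'4 : ∀ k, 1 ≤ k → pquot β (4 * k) + 2 = 4 * Q k + 3 * R k)
    (ha'5 : ∀ k, 1 ≤ k → pquot β (4 * k + 1) = 1)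
    (ha'6 : ∀ k, 1 ≤ k → pquot β (4 * k + 2) + 1 = 6 * Q k + 4 * R k)
    :
    ∀ k, 1 ≤ k →
      0 < 2 * (nint ((qden β (4 * k - 1) : ℝ) * β) - nint ((qden α (4 * k) : ℝ) * α))
          * (pquot α (4 * k + 1) : ℝ) ∧
      2 * (nint ((qden β (4 * k - 1) : ℝ) * β) - nint ((qden α (4 * k) : ℝ) * α))
          * (pquot α (4 * k + 1) : ℝ) < nint ((qden α (4 * k + 1) : ℝ) * α) ∧
      nint ((qden α (4 * k + 1) : ℝ) * α) < nint ((qden β (4 * k + 1) : ℝ) * β) := by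
  intro k hk
  obtain ⟨j, rfl⟩ : ∃ j, k = j + 1 := ⟨k - 1, by omega⟩
  have hmaster := CFAux.masterInv α β hα hβ R Q hR hQ ha1 ha2 ha'1 ha'2
    ha3 ha4 ha5 ha6 ha'3 ha'4 ha'5 ha'6 j
  obtain ⟨f3, f4, f5, f6, g3, g4, g5, g6, hQQ, hRR⟩ :=
    CFAux.blockForms α β hα hβ R Q hR hQ ha3 ha4 ha5 ha6 ha'3 ha'4 ha'5 ha'6 j
      hmaster.1 hmaster.2
  -- normalize indices in the goal
  simp only [show 4*(j+1)-1 = 4*j+3 by omega, show 4*(j+1) = 4*j+4 by omega,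
    show 4*(j+1)+1 = 4*j+5 by omega, show 4*j+4-1 = 4*j+3 by omega,
    show 4*j+4+1 = 4*j+5 by omega]
  -- real variables for Q, R
  obtain ⟨x, hxe⟩ : ∃ t : ℝ, t = ((Q (j+1) : ℕ) : ℝ) := ⟨_, rfl⟩
  obtain ⟨y, hye⟩ : ∃ t : ℝ, t = ((R (j+1) : ℕ) : ℝ) := ⟨_, rfl⟩
  have hx : (1 : ℝ) ≤ x := by rw [hxe]; exact_mod_cast hQQ
  have hy : (2 : ℝ) ≤ y := by rw [hye]; exact_mod_cast hRR
  -- real closed forms for the denominators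
  have rf4 : (qden α (4*j+4) : ℝ) = 4*x+3*y+1 := by
    rw [hxe, hye]; exact_mod_cast f4
  have rf5 : (qden α (4*j+5) : ℝ) = (2*x+y-1)*(4*x+3*y+1)+x+y := by
    rw [hxe, hye]; exact_mod_cast f5
  have rf6 : (qden α (4*j+6) : ℝ)
      = (6*x+4*y)*((2*x+y-1)*(4*x+3*y+1)+x+y) + (4*x+3*y+1) := by
    rw [hxe, hye]; exact_mod_cast f6
  have rg4 : (qden β (4*j+4) : ℝ) = ((2*x+y-1)*(4*x+3*y+1)+x+y) + 1 - (2*x+y) := by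
    have h4 : (qden β (4*j+4) : ℝ) = (4*x+3*y-2)*(2*x+y)+x := by
      rw [hxe, hye]; exact_mod_cast g4
    linear_combination h4
  have rg5 : (qden β (4*j+5) : ℝ) = ((2*x+y-1)*(4*x+3*y+1)+x+y) + 1 := by
    rw [hxe, hye]; exact_mod_cast g5
  have rg6 : (qden β (4*j+6) : ℝ)
      = ((6*x+4*y)*((2*x+y-1)*(4*x+3*y+1)+x+y) + (4*x+3*y+1)) - 1 := by
    rw [hxe, hye]; exact_mod_cast g6
  clear f3 f4 f5 f6 g3 g4 g5 g6 hmaster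
  -- basic positivity
  have p1 : (0:ℝ) < 2*x+y-1 := by linarith
  have p2 : (0:ℝ) < 4*x+3*y+1 := by linarith
  have p3 : (0:ℝ) < 6*x+4*y := by linarith
  have hA : (0:ℝ) < (2*x+y-1)*(4*x+3*y+1)+x+y := by
    have := mul_pos p1 p2; linarith
  have hBpos : (0:ℝ) < (6*x+4*y)*((2*x+y-1)*(4*x+3*y+1)+x+y) + (4*x+3*y+1) := by
    have := mul_pos p3 hA; linarith
  have hB1 : (1:ℝ) < (6*x+4*y)*((2*x+y-1)*(4*x+3*y+1)+x+y) + (4*x+3*y+1) := by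
    have := mul_pos p3 hA; linarith
  have hb : (0:ℝ) < 4*x+3*y+1 := p2
  have hs : (0:ℝ) < 2*x+y := by linarith
  have hs1 : (1:ℝ) < 2*x+y := by linarith
  -- D facts
  have dpos : ∀ n, 0 < CFAux.D α n := CFAux.D_pos hα hα0
  have epos : ∀ n, 0 < CFAux.D β n := CFAux.D_pos hβ hβ0
  have dlt56 : CFAux.D α (4*j+6) < CFAux.D α (4*j+5) := by
    have h := CFAux.D_lt hα hα0 (4*j+5)
    simp only [show 4*j+5+1 = 4*j+6 by omega] at h
    exact h
  have dlt67 : CFAux.D α (4*j+7) < CFAux.D α (4*j+6) := by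
    have h := CFAux.D_lt hα hα0 (4*j+6)
    simp only [show 4*j+6+1 = 4*j+7 by omega] at h
    exact h
  have elt56 : CFAux.D β (4*j+6) < CFAux.D β (4*j+5) := by
    have h := CFAux.D_lt hβ hβ0 (4*j+5)
    simp only [show 4*j+5+1 = 4*j+6 by omega] at h
    exact h
  have I1 := CFAux.key_identity hα hα0 hα1 (4*j+4)
  simp only [show 4*j+4+1 = 4*j+5 by omega] at I1
  have I2 := CFAux.key_identity hα hα0 hα1 (4*j+5)
  simp only [show 4*j+5+1 = 4*j+6 by omega] at I2
  have I3 := CFAux.key_identity hβ hβ0 hβ1 (4*j+4)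
  simp only [show 4*j+4+1 = 4*j+5 by omega] at I3
  have I4 := CFAux.key_identity hβ hβ0 hβ1 (4*j+5)
  simp only [show 4*j+5+1 = 4*j+6 by omega] at I4
  rw [rf5, rf4] at I1
  rw [rf6, rf5] at I2
  rw [rg5, rg4] at I3
  rw [rg6, rg5] at I4
  -- recurrences for D
  have b5 := ha'5 (j+1) (by omega)
  rw [show 4*(j+1)+1 = 4*j+5 by omega] at b5
  have Rb1 := CFAux.D_rec hβ (4*j+3)
  simp only [show 4*j+3+2 = 4*j+5 by omega, show 4*j+3+1 = 4*j+4 by omega, b5] at Rb1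
  norm_num at Rb1
  have a7 := ha3 (j+2) (by omega)
  rw [show 4*(j+2)-1 = 4*j+7 by omega] at a7
  have Ra2 := CFAux.D_rec hα (4*j+5)
  simp only [show 4*j+5+2 = 4*j+7 by omega, show 4*j+5+1 = 4*j+6 by omega, a7] at Ra2
  norm_num at Ra2
  have b7 := ha'3 (j+2) (by omega)
  rw [show 4*(j+2)-1 = 4*j+7 by omega] at b7
  have Rb2 := CFAux.D_rec hβ (4*j+5)
  simp only [show 4*j+5+2 = 4*j+7 by omega, show 4*j+5+1 = 4*j+6 by omega, b7] at Rb2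
  norm_num at Rb2
  -- h2 : (A+1)*e3 = 1 + s*e5
  have h2 : (((2*x+y-1)*(4*x+3*y+1)+x+y) + 1) * CFAux.D β (4*j+3)
      = 1 + (2*x+y) * CFAux.D β (4*j+5) := by
    linear_combination I3 - (((2*x+y-1)*(4*x+3*y+1)+x+y) + 1) * Rb1
  -- bounds coming from the identities
  have hSd : 1 < (((2*x+y-1)*(4*x+3*y+1)+x+y)
      + ((6*x+4*y)*((2*x+y-1)*(4*x+3*y+1)+x+y) + (4*x+3*y+1))) * CFAux.D α (4*j+5) := by
    have t := mul_pos hA (show 0 < CFAux.D α (4*j+5) - CFAux.D α (4*j+6) by linarith)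
    linarith [I2, t]
  have hSe : 1 < (((2*x+y-1)*(4*x+3*y+1)+x+y)
      + ((6*x+4*y)*((2*x+y-1)*(4*x+3*y+1)+x+y) + (4*x+3*y+1))) * CFAux.D β (4*j+5) := by
    have t := mul_pos (show (0:ℝ) < ((2*x+y-1)*(4*x+3*y+1)+x+y) + 1 by linarith)
      (show 0 < CFAux.D β (4*j+5) - CFAux.D β (4*j+6) by linarith)
    linarith [I4, t]
  have hd5B : ((6*x+4*y)*((2*x+y-1)*(4*x+3*y+1)+x+y) + (4*x+3*y+1))
      * CFAux.D α (4*j+5) < 1 := by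
    have t := mul_pos hA (dpos (4*j+6))
    linarith [I2, t]
  have he5B : (((6*x+4*y)*((2*x+y-1)*(4*x+3*y+1)+x+y) + (4*x+3*y+1)) - 1)
      * CFAux.D β (4*j+5) < 1 := by
    have t := mul_pos (show (0:ℝ) < ((2*x+y-1)*(4*x+3*y+1)+x+y) + 1 by linarith)
      (epos (4*j+6))
    linarith [I4, t]
  -- the three conclusions
  have goal1 : 0 < CFAux.D β (4*j+3) - CFAux.D α (4*j+4) :=
    CFAux.abstract1 ((2*x+y-1)*(4*x+3*y+1)+x+y)
      ((6*x+4*y)*((2*x+y-1)*(4*x+3*y+1)+x+y) + (4*x+3*y+1))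
      (4*x+3*y+1) (2*x+y)
      (CFAux.D α (4*j+4)) (CFAux.D α (4*j+5)) (CFAux.D β (4*j+3)) (CFAux.D β (4*j+5))
      hA hBpos hb hs (dpos _) (epos _) I1 h2 hSd hSe (CFAux.polyP1 x y)
  have goal2raw := CFAux.abstract2 ((2*x+y-1)*(4*x+3*y+1)+x+y)
      ((6*x+4*y)*((2*x+y-1)*(4*x+3*y+1)+x+y) + (4*x+3*y+1))
      (4*x+3*y+1) (2*x+y)
      (CFAux.D α (4*j+5)) (CFAux.D β (4*j+5))
      hA hB1 hb hs1 (dpos _) (epos _) hd5B he5B (CFAux.polyP2 x y hx hy)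
      (CFAux.polyP3 x y hx hy)
  have hX : ((2*x+y-1)*(4*x+3*y+1)+x+y) * (((2*x+y-1)*(4*x+3*y+1)+x+y) + 1)
        * (CFAux.D β (4*j+3) - CFAux.D α (4*j+4))
      = ((2*x+y-1)*(4*x+3*y+1)+x+y) * (2*x+y) * CFAux.D β (4*j+5)
        + (((2*x+y-1)*(4*x+3*y+1)+x+y) + 1) * (4*x+3*y+1) * CFAux.D α (4*j+5) - 1 := by
    linear_combination ((2*x+y-1)*(4*x+3*y+1)+x+y) * h2
      - (((2*x+y-1)*(4*x+3*y+1)+x+y) + 1) * I1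
  have hX2 : 2 * (2*x+y-1) * (((2*x+y-1)*(4*x+3*y+1)+x+y)
        * (((2*x+y-1)*(4*x+3*y+1)+x+y) + 1) * (CFAux.D β (4*j+3) - CFAux.D α (4*j+4)))
      = 2 * (2*x+y-1) * (((2*x+y-1)*(4*x+3*y+1)+x+y) * (2*x+y) * CFAux.D β (4*j+5)
        + (((2*x+y-1)*(4*x+3*y+1)+x+y) + 1) * (4*x+3*y+1) * CFAux.D α (4*j+5) - 1) := by
    linear_combination (2 * (2*x+y-1)) * hX
  have goal2 : 2 * (CFAux.D β (4*j+3) - CFAux.D α (4*j+4)) * (2*x+y-1)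
      < CFAux.D α (4*j+5) := by
    have hAA : (0:ℝ) < ((2*x+y-1)*(4*x+3*y+1)+x+y)
        * (((2*x+y-1)*(4*x+3*y+1)+x+y) + 1) := by
      have h1 : (0:ℝ) < ((2*x+y-1)*(4*x+3*y+1)+x+y) + 1 := by linarith
      exact mul_pos hA h1
    by_contra hle
    push_neg at hle
    have hmul := mul_le_mul_of_nonneg_left hle hAA.le
    linarith [goal2raw, hX2, hmul]
  have goal3 : CFAux.D α (4*j+5) < CFAux.D β (4*j+5) :=
    CFAux.abstract3 ((2*x+y-1)*(4*x+3*y+1)+x+y)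
      ((6*x+4*y)*((2*x+y-1)*(4*x+3*y+1)+x+y) + (4*x+3*y+1))
      (CFAux.D α (4*j+5)) (CFAux.D α (4*j+6)) (CFAux.D α (4*j+7))
      (CFAux.D β (4*j+5)) (CFAux.D β (4*j+6)) (CFAux.D β (4*j+7))
      hA hB1 I2 I4 Ra2 Rb2 (dpos (4*j+7)) dlt67 (epos (4*j+7)) (epos (4*j+5)) (dpos (4*j+5))
  -- rewrite the goal via nint
  have n3 : nint ((qden β (4*j+3) : ℝ) * β) = CFAux.D β (4*j+3) :=
    CFAux.nint_eq hβ hβ0 hβ1 _ (by omega)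
  have n4 : nint ((qden α (4*j+4) : ℝ) * α) = CFAux.D α (4*j+4) :=
    CFAux.nint_eq hα hα0 hα1 _ (by omega)
  have n5 : nint ((qden α (4*j+5) : ℝ) * α) = CFAux.D α (4*j+5) :=
    CFAux.nint_eq hα hα0 hα1 _ (by omega)
  have n5' : nint ((qden β (4*j+5) : ℝ) * β) = CFAux.D β (4*j+5) :=
    CFAux.nint_eq hβ hβ0 hβ1 _ (by omega)
  rw [n3, n4, n5, n5']
  have a5 := ha5 (j+1) (by omega)
  rw [show 4*(j+1)+1 = 4*j+5 by omega] at a5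
  have hp5 : (pquot α (4*j+5) : ℝ) = 2*x+y-1 := by
    have hcast : ((pquot α (4*j+5) : ℕ) : ℝ) + 1 = 2*x+y := by
      rw [hxe, hye]; exact_mod_cast a5
    linarith
  rw [hp5]
  refine ⟨?_, ?_, ?_⟩
  · have hprod := mul_pos goal1 p1
    linarith
  · exact goal2
  · exact goal3
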